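/- Let $K$ be a number field with ring of integers $\mathcal{O}_K$, let $d \geq 3$ be odd such that $d$ is not a square in $K$, let $\mathfrak{q}$ be a prime of $\mathcal{O}_K$ dividing $d$ to an odd power (so $\mathfrak{q}$ lies over an odd rational prime), and let $L = K(\sqrt{u_1}, \dots, \sqrt{u_r})$ where $u_1, \dots, u_r$ generate the unit group $\mathcal{O}_K^\times$. Then $K(\sqrt{d}) \cap L = K$, and $L(\sqrt{d})/L$ is a quadratic extension. -/

import Mathlib

open NumberField IsDedekindDomain

/-- If `y^2 ∈ F`, every element of `F(y)` is of the form `s + t*y` with `s, t ∈ F`. -/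
lemma quad_rep {Ω : Type*} [Field Ω] (F : Subfield Ω) (y : Ω) (hy : y ^ 2 ∈ F) (x : Ω)
    (hx : x ∈ Subfield.closure ((F : Set Ω) ∪ {y})) :
    ∃ s ∈ F, ∃ t ∈ F, x = s + t * y := by
  by_cases hyF : y ∈ F
  · have hcl : Subfield.closure ((F : Set Ω) ∪ {y}) = F := by
      rw [Subfield.closure_union, Subfield.closure_eq]
      refine le_antisymm (sup_le le_rfl ?_) le_sup_left
      rw [Subfield.closure_le, Set.singleton_subset_iff]
      exact hyF
    rw [hcl] at hx
    exact ⟨x, hx, 0, F.zero_mem, by ring⟩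
  · let E : Subfield Ω :=
      { carrier := {z : Ω | ∃ s ∈ F, ∃ t ∈ F, z = s + t * y}
        one_mem' := ⟨1, F.one_mem, 0, F.zero_mem, by ring⟩
        zero_mem' := ⟨0, F.zero_mem, 0, F.zero_mem, by ring⟩
        add_mem' := by
          rintro z w ⟨s, hs, t, ht, rfl⟩ ⟨s', hs', t', ht', rfl⟩
          exact ⟨s + s', F.add_mem hs hs', t + t', F.add_mem ht ht', by ring⟩
        neg_mem' := by
          rintro z ⟨s, hs, t, ht, rfl⟩
          exact ⟨-s, F.neg_mem hs, -t, F.neg_mem ht, by ring⟩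
        mul_mem' := by
          rintro z w ⟨s, hs, t, ht, rfl⟩ ⟨s', hs', t', ht', rfl⟩
          exact ⟨s * s' + t * t' * y ^ 2, F.add_mem (F.mul_mem hs hs')
              (F.mul_mem (F.mul_mem ht ht') hy),
            s * t' + t * s', F.add_mem (F.mul_mem hs ht') (F.mul_mem ht hs'), by ring⟩
        inv_mem' := by
          rintro z ⟨s, hs, t, ht, rfl⟩
          by_cases htz : t = 0
          · exact ⟨s⁻¹, F.inv_mem hs, 0, F.zero_mem, by simp [htz]⟩
          · have hn : s ^ 2 - t ^ 2 * y ^ 2 ≠ 0 := by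
              intro h
              have h2 : (y - s / t) * (y + s / t) = 0 := by
                field_simp
                linear_combination -h
              rcases mul_eq_zero.mp h2 with h3 | h3
              · exact hyF (sub_eq_zero.mp h3 ▸ F.div_mem hs ht)
              · exact hyF ((eq_neg_of_add_eq_zero_left h3) ▸ F.neg_mem (F.div_mem hs ht))
            refine ⟨s / (s ^ 2 - t ^ 2 * y ^ 2),
              F.div_mem hs (F.sub_mem (F.pow_mem hs 2) (F.mul_mem (F.pow_mem ht 2) hy)),
              -(t / (s ^ 2 - t ^ 2 * y ^ 2)),
              F.neg_mem (F.div_mem ht (F.sub_mem (F.pow_mem hs 2) (F.mul_mem (F.pow_mem ht 2) hy))),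
              inv_eq_of_mul_eq_one_right ?_⟩
            field_simp
            ring }
    have hle : Subfield.closure ((F : Set Ω) ∪ {y}) ≤ E := by
      rw [Subfield.closure_le, Set.union_subset_iff, Set.singleton_subset_iff]
      exact ⟨fun z hz => ⟨z, hz, 0, F.zero_mem, by ring⟩,
        ⟨0, F.zero_mem, 1, F.one_mem, by ring⟩⟩
    exact hle hx


lemma kummer_descent {K Ω : Type*} [Field K] [NumberField K] [Field Ω] [Algebra K Ω]
    [CharZero Ω] (S : Set Ω) (hSfin : S.Finite)
    (hT : ∀ x ∈ S, ∃ v : (RingOfIntegers K)ˣ,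
      x ^ 2 = algebraMap K Ω (algebraMap (RingOfIntegers K) K (v : RingOfIntegers K))) :
    ∀ x ∈ Subfield.closure (Set.range (algebraMap K Ω) ∪ S), ∀ c : K,
      x ^ 2 = algebraMap K Ω c →
      ∃ (s : K) (v : (RingOfIntegers K)ˣ),
        c = s ^ 2 * algebraMap (RingOfIntegers K) K (v : RingOfIntegers K) := by
  revert hT
  refine Set.Finite.induction_on _ hSfin ?_ ?_
  · intro hT x hx c hc
    have hle : Subfield.closure (Set.range (algebraMap K Ω) ∪ (∅ : Set Ω)) ≤
        (algebraMap K Ω).fieldRange := by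
      rw [Set.union_empty, Subfield.closure_le]
      exact fun z hz => hz
    obtain ⟨s, rfl⟩ := hle hx
    refine ⟨s, 1, ?_⟩
    have : algebraMap K Ω (s ^ 2) = algebraMap K Ω c := by rw [map_pow]; exact hc
    have hc' := (algebraMap K Ω).injective this
    rw [← hc']
    simp
  · rintro y S₀ hyS₀ hS₀fin ih hT x hx c hc
    have hTS₀ : ∀ x ∈ S₀, ∃ v : (RingOfIntegers K)ˣ,
        x ^ 2 = algebraMap K Ω (algebraMap (RingOfIntegers K) K (v : RingOfIntegers K)) :=
      fun z hz => hT z (Set.mem_insert_of_mem _ hz)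
    have ihh := ih hTS₀
    obtain ⟨v, hv⟩ := hT y (Set.mem_insert _ _)
    set F : Subfield Ω := Subfield.closure (Set.range (algebraMap K Ω) ∪ S₀) with hF
    have hx' : x ∈ Subfield.closure ((F : Set Ω) ∪ {y}) := by
      have hle : Subfield.closure (Set.range (algebraMap K Ω) ∪ insert y S₀) ≤
          Subfield.closure ((F : Set Ω) ∪ {y}) := by
        rw [Subfield.closure_le, Set.union_subset_iff]
        constructor
        · intro z hz
          exact Subfield.subset_closure (Set.mem_union_left _
            (Subfield.subset_closure (Set.mem_union_left _ hz)))
        · intro z hz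
          rcases hz with rfl | hz
          · exact Subfield.subset_closure (Set.mem_union_right _ rfl)
          · exact Subfield.subset_closure (Set.mem_union_left _
              (Subfield.subset_closure (Set.mem_union_right _ hz)))
      exact hle hx
    have hyF : y ^ 2 ∈ F := by
      rw [hv]
      exact Subfield.subset_closure (Set.mem_union_left _ ⟨_, rfl⟩)
    obtain ⟨s, hs, t, ht, rfl⟩ := quad_rep F y hyF x hx'
    have hexp : s ^ 2 + t ^ 2 * y ^ 2 + 2 * (s * t) * y = algebraMap K Ω c := by
      rw [← hc]; ring
    by_cases hst : s * t = 0
    · rcases mul_eq_zero.mp hst with h0 | h0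
      · -- s = 0 : (t*y)^2 = c, so t^2 = c / v
        subst h0
        have hBv : algebraMap (RingOfIntegers K) K (v : RingOfIntegers K) *
            algebraMap (RingOfIntegers K) K ((v⁻¹ : (RingOfIntegers K)ˣ) : RingOfIntegers K)
            = 1 := by rw [← map_mul, Units.mul_inv, map_one]
        have hBvΩ : algebraMap K Ω (algebraMap (RingOfIntegers K) K (v : RingOfIntegers K)) *
            algebraMap K Ω (algebraMap (RingOfIntegers K) K
              ((v⁻¹ : (RingOfIntegers K)ˣ) : RingOfIntegers K)) = 1 := by
          rw [← map_mul, hBv, map_one]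
        have h2 : t ^ 2 * algebraMap K Ω (algebraMap (RingOfIntegers K) K
            (v : RingOfIntegers K)) = algebraMap K Ω c := by
          linear_combination hc - t ^ 2 * hv
        have ht2 : t ^ 2 = algebraMap K Ω (c * algebraMap (RingOfIntegers K) K
            ((v⁻¹ : (RingOfIntegers K)ˣ) : RingOfIntegers K)) := by
          rw [map_mul]
          linear_combination (algebraMap K Ω (algebraMap (RingOfIntegers K) K
            ((v⁻¹ : (RingOfIntegers K)ˣ) : RingOfIntegers K))) * h2 - t ^ 2 * hBvΩ
        obtain ⟨s₀, w, hw⟩ := ihh t ht _ ht2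
        refine ⟨s₀, w * v, ?_⟩
        have hKv : algebraMap (RingOfIntegers K) K
            ((v⁻¹ : (RingOfIntegers K)ˣ) : RingOfIntegers K) *
            algebraMap (RingOfIntegers K) K (v : RingOfIntegers K) = 1 := by
          rw [← map_mul, Units.inv_mul, map_one]
        calc c = (c * algebraMap (RingOfIntegers K) K
              ((v⁻¹ : (RingOfIntegers K)ˣ) : RingOfIntegers K)) *
              algebraMap (RingOfIntegers K) K (v : RingOfIntegers K) := by
              rw [mul_assoc, hKv, mul_one]
          _ = s₀ ^ 2 * algebraMap (RingOfIntegers K) K ((w * v : (RingOfIntegers K)ˣ) :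
              RingOfIntegers K) := by
              rw [hw, Units.val_mul, map_mul]; ring
      · -- t = 0 : x = s ∈ F
        subst h0
        refine ihh s hs c ?_
        rw [← hc]; ring
    · -- s*t ≠ 0 : then y ∈ F, so x ∈ F
      have hyF' : y ∈ F := by
        have h2st : (2 : Ω) * (s * t) ≠ 0 := mul_ne_zero two_ne_zero hst
        have hy : y = (algebraMap K Ω c - s ^ 2 - t ^ 2 * y ^ 2) / (2 * (s * t)) := by
          rw [eq_div_iff h2st]
          linear_combination hexp
        rw [hy]
        refine F.div_mem (F.sub_mem (F.sub_mem ?_ (F.pow_mem hs 2))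
          (F.mul_mem (F.pow_mem ht 2) hyF)) (F.mul_mem ?_ (F.mul_mem hs ht))
        · exact Subfield.subset_closure (Set.mem_union_left _ ⟨c, rfl⟩)
        · exact Subfield.subset_closure (Set.mem_union_left _ ⟨2, map_ofNat _ 2⟩)
      exact ihh _ (F.add_mem hs (F.mul_mem ht hyF')) c hc


lemma val_no_sq {K : Type*} [Field K] [NumberField K] (d : ℕ) (hd : 3 ≤ d)
    (q : HeightOneSpectrum (RingOfIntegers K))
    (hq : ∃ k : ℕ, Odd k ∧ q.intValuation (d : RingOfIntegers K) =
      ((Multiplicative.ofAdd (-(k : ℤ)) : Multiplicative ℤ) : WithZero (Multiplicative ℤ))) :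
    ¬ ∃ (s : K) (v : (RingOfIntegers K)ˣ),
      (d : K) = s ^ 2 * algebraMap (RingOfIntegers K) K (v : RingOfIntegers K) := by
  rintro ⟨s, v, h⟩
  obtain ⟨k, hk, hval⟩ := hq
  have hd0 : (d : K) ≠ 0 := Nat.cast_ne_zero.mpr (by omega)
  have hs0 : s ≠ 0 := by
    rintro rfl
    rw [zero_pow two_ne_zero, zero_mul] at h
    exact hd0 h
  -- valuation of d
  have h1 : q.valuation K (d : K) =
      ((Multiplicative.ofAdd (-(k : ℤ)) : Multiplicative ℤ) : WithZero (Multiplicative ℤ)) := by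
    rw [show ((d : K)) = algebraMap (RingOfIntegers K) K ((d : RingOfIntegers K)) by
        rw [map_natCast],
      q.valuation_of_algebraMap, hval]
  -- valuation of the unit is 1
  have hv1 : q.intValuation ((v : RingOfIntegers K)) = 1 := by
    have h2 := q.intValuation_le_one (v : RingOfIntegers K)
    have h3 := q.intValuation_le_one ((v⁻¹ : (RingOfIntegers K)ˣ) : RingOfIntegers K)
    have h4 : q.intValuation ((v : RingOfIntegers K)) *
        q.intValuation ((v⁻¹ : (RingOfIntegers K)ˣ) : RingOfIntegers K) = 1 := by
      rw [← map_mul, Units.mul_inv, map_one]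
    refine le_antisymm h2 ?_
    calc (1 : WithZero (Multiplicative ℤ)) = q.intValuation ((v : RingOfIntegers K)) *
          q.intValuation ((v⁻¹ : (RingOfIntegers K)ˣ) : RingOfIntegers K) := h4.symm
      _ ≤ q.intValuation ((v : RingOfIntegers K)) * 1 := mul_le_mul_right h3 _
      _ = q.intValuation ((v : RingOfIntegers K)) := mul_one _
  have h5 : q.valuation K ((d : K)) = (q.valuation K s) ^ 2 := by
    rw [h, map_mul, map_pow, q.valuation_of_algebraMap, hv1, mul_one]
  have hs' : q.valuation K s ≠ 0 := (Valuation.ne_zero_iff _).mpr hs0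
  obtain ⟨m, hm⟩ : ∃ m : Multiplicative ℤ, (m : WithZero (Multiplicative ℤ)) = q.valuation K s :=
    ⟨WithZero.unzero hs', WithZero.coe_unzero hs'⟩
  rw [h1, ← hm, ← WithZero.coe_pow] at h5
  have h6 : Multiplicative.ofAdd (-(k : ℤ)) = m ^ 2 := WithZero.coe_inj.mp h5
  have h7 : -(k : ℤ) = 2 • m.toAdd := by
    rw [← toAdd_pow, ← h6]
    rfl
  obtain ⟨j, hj⟩ := hk
  have h8 : -(k : ℤ) = 2 * m.toAdd := by rw [h7]; norm_num
  omega


lemma sq_fiber_finite {Ω : Type*} [Field Ω] (a : Ω) : {x : Ω | x ^ 2 = a}.Finite := by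
  refine (Polynomial.finite_setOf_isRoot
    ((Polynomial.monic_X_pow_sub_C a (two_ne_zero)).ne_zero)).subset ?_
  intro x hx
  simp only [Set.mem_setOf_eq, Polynomial.IsRoot, Polynomial.eval_sub, Polynomial.eval_pow,
    Polynomial.eval_X, Polynomial.eval_C]
  rw [hx]; ring

theorem stmt18 (K : Type*) [Field K] [NumberField K] (d : ℕ) (hd : 3 ≤ d) (hodd : Odd d)
    (hdsq : ¬ ∃ x : K, x ^ 2 = (d : K))
    (q : HeightOneSpectrum (RingOfIntegers K))
    (hq : ∃ k : ℕ, Odd k ∧ q.intValuation (d : RingOfIntegers K) =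
      ((Multiplicative.ofAdd (-(k : ℤ)) : Multiplicative ℤ) : WithZero (Multiplicative ℤ)))
    (r : ℕ) (u : Fin r → (RingOfIntegers K)ˣ)
    (hu : Subgroup.closure (Set.range u) = (⊤ : Subgroup (RingOfIntegers K)ˣ)) :
    (let Ω := AlgebraicClosure K
     let L : IntermediateField K Ω := IntermediateField.adjoin K
       {x : Ω | ∃ i : Fin r, x ^ 2 =
         algebraMap K Ω (algebraMap (RingOfIntegers K) K ((u i : RingOfIntegers K)))}
     let Kd : IntermediateField K Ω := IntermediateField.adjoin K {x : Ω | x ^ 2 = (d : Ω)}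
     Kd ⊓ L = ⊥ ∧ Module.finrank K ↥(L ⊔ Kd) = 2 * Module.finrank K ↥L) := by
  intro Ω L Kd
  set S : Set Ω := {x : Ω | ∃ i : Fin r, x ^ 2 =
    algebraMap K Ω (algebraMap (RingOfIntegers K) K ((u i : RingOfIntegers K)))} with hSdef
  have hSfin : S.Finite := by
    refine (Set.finite_iUnion (fun i : Fin r => sq_fiber_finite
      (algebraMap K Ω (algebraMap (RingOfIntegers K) K ((u i : RingOfIntegers K)))))).subset ?_
    rintro x ⟨i, hi⟩
    exact Set.mem_iUnion.mpr ⟨i, hi⟩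
  have hT : ∀ x ∈ S, ∃ v : (RingOfIntegers K)ˣ,
      x ^ 2 = algebraMap K Ω (algebraMap (RingOfIntegers K) K (v : RingOfIntegers K)) :=
    fun x hx => by obtain ⟨i, hi⟩ := hx; exact ⟨u i, hi⟩
  have hnoL : ∀ z ∈ L, z ^ 2 ≠ (d : Ω) := by
    intro z hz h2
    have hle : (IntermediateField.adjoin K S).toSubfield ≤
        Subfield.closure (Set.range (algebraMap K Ω) ∪ S) :=
      IntermediateField.adjoin_le_subfield K S
        (fun w hw => Subfield.subset_closure (Set.mem_union_left _ hw))
        (fun w hw => Subfield.subset_closure (Set.mem_union_right _ hw))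
    have hzc : z ∈ Subfield.closure (Set.range (algebraMap K Ω) ∪ S) := hle hz
    have hzd : z ^ 2 = algebraMap K Ω ((d : K)) := by rw [h2, map_natCast]
    obtain ⟨s, v, hsv⟩ := kummer_descent S hSfin hT z hzc (d : K) hzd
    exact val_no_sq d hd q hq ⟨s, v, hsv⟩
  obtain ⟨x₀, hx₀⟩ := IsAlgClosed.exists_pow_nat_eq (d : Ω) (n := 2) (by norm_num)
  have hKd : Kd = IntermediateField.adjoin K {x₀} := by
    have hsub : {x : Ω | x ^ 2 = (d : Ω)} = {x₀, -x₀} := by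
      ext z
      simp only [Set.mem_setOf_eq, Set.mem_insert_iff, Set.mem_singleton_iff]
      constructor
      · intro hz
        have hzz : (z - x₀) * (z + x₀) = 0 := by linear_combination hz - hx₀
        rcases mul_eq_zero.mp hzz with h | h
        · exact Or.inl (sub_eq_zero.mp h)
        · exact Or.inr (eq_neg_of_add_eq_zero_left h)
      · rintro (rfl | rfl)
        · exact hx₀
        · rw [neg_pow, hx₀]; norm_num
    show IntermediateField.adjoin K {x : Ω | x ^ 2 = (d : Ω)} = _
    rw [hsub]
    apply le_antisymm
    · rw [IntermediateField.adjoin_le_iff]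
      rintro w (hw | hw)
      · rw [hw]; exact IntermediateField.subset_adjoin K ({x₀} : Set Ω) rfl
      · rw [hw]; exact neg_mem (IntermediateField.subset_adjoin K ({x₀} : Set Ω) rfl)
    · exact IntermediateField.adjoin.mono K _ _ (by simp)
  constructor
  · -- Kd ⊓ L = ⊥
    rw [eq_bot_iff]
    intro z hz
    obtain ⟨hzKd, hzL⟩ : z ∈ Kd ∧ z ∈ L := by
      exact ⟨(inf_le_left : Kd ⊓ L ≤ Kd) hz, (inf_le_right : Kd ⊓ L ≤ L) hz⟩
    have hzc : z ∈ Subfield.closure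
        ((((algebraMap K Ω).fieldRange : Subfield Ω) : Set Ω) ∪ {x₀}) := by
      have hle : (IntermediateField.adjoin K {x₀}).toSubfield ≤
          Subfield.closure ((((algebraMap K Ω).fieldRange : Subfield Ω) : Set Ω) ∪ {x₀}) :=
        IntermediateField.adjoin_le_subfield K ({x₀} : Set Ω)
          (fun w hw => Subfield.subset_closure (Set.mem_union_left _ hw))
          (fun w hw => Subfield.subset_closure (Set.mem_union_right _ hw))
      exact hle (hKd ▸ hzKd)
    have hx₀2 : x₀ ^ 2 ∈ (algebraMap K Ω).fieldRange := ⟨(d : K), by rw [map_natCast, hx₀]⟩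
    obtain ⟨a, ha, b, hb, hzeq⟩ := quad_rep _ x₀ hx₀2 z hzc
    by_cases hb0 : b = 0
    · rw [IntermediateField.mem_bot]
      obtain ⟨a', ha'⟩ := ha
      exact ⟨a', by rw [ha', hzeq, hb0, zero_mul, add_zero]⟩
    · exfalso
      have haL : a ∈ L := by
        obtain ⟨a', rfl⟩ := ha
        exact L.algebraMap_mem a'
      have hbL : b ∈ L := by
        obtain ⟨b', rfl⟩ := hb
        exact L.algebraMap_mem b'
      have hx₀L : x₀ ∈ L := by
        have hx0eq : x₀ = (z - a) / b := by
          rw [hzeq, add_sub_cancel_left, mul_div_cancel_left₀ _ hb0]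
        rw [hx0eq]
        exact L.div_mem (L.sub_mem hzL haL) hbL
      exact hnoL x₀ hx₀L hx₀
  · -- finrank
    haveI : Finite ↥S := hSfin.to_subtype
    haveI hfdL : FiniteDimensional K ↥L :=
      IntermediateField.finiteDimensional_adjoin
        (fun x _ => isAlgebraic_iff_isIntegral.mp (Algebra.IsAlgebraic.isAlgebraic x))
    have hx₀int : IsIntegral (↥L) x₀ :=
      IsIntegral.tower_top (A := ↥L) (isAlgebraic_iff_isIntegral.mp (Algebra.IsAlgebraic.isAlgebraic (R := K) x₀))
    have hdL : algebraMap (↥L) Ω ((d : ↥L)) = (d : Ω) := map_natCast _ d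
    have hirr : Irreducible (Polynomial.X ^ 2 - Polynomial.C ((d : ↥L))) := by
      refine X_pow_sub_C_irreducible_of_prime Nat.prime_two ?_
      intro b hb
      refine hnoL (b : Ω) b.2 ?_
      have := congrArg (algebraMap (↥L) Ω) hb
      rw [map_pow, hdL] at this
      exact this
    have hmin : minpoly (↥L) x₀ = Polynomial.X ^ 2 - Polynomial.C ((d : ↥L)) := by
      refine (minpoly.eq_of_irreducible_of_monic hirr ?_
        (Polynomial.monic_X_pow_sub_C _ two_ne_zero)).symm
      rw [map_sub, map_pow, Polynomial.aeval_X, Polynomial.aeval_C, hdL, hx₀, sub_self]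
    have hfr2 : Module.finrank (↥L) ↥(IntermediateField.adjoin (↥L) {x₀}) = 2 := by
      rw [IntermediateField.adjoin.finrank hx₀int, hmin, Polynomial.natDegree_X_pow_sub_C]
    have hsup : L ⊔ Kd = (IntermediateField.adjoin (↥L) {x₀}).restrictScalars K := by
      rw [IntermediateField.restrictScalars_adjoin_eq_sup, hKd]
    rw [hsup]
    have := Module.finrank_mul_finrank K (↥L) ↥(IntermediateField.adjoin (↥L) {x₀})
    rw [hfr2] at this
    rw [show Module.finrank K ↥((IntermediateField.adjoin (↥L) {x₀}).restrictScalars K) =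
      Module.finrank K ↥(IntermediateField.adjoin (↥L) {x₀}) from rfl, ← this, mul_comm]
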